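/- Let f : [0,1]^k → ℝ and g : [0,1]^{n-k} → ℝ be continuous functions (1 ≤ k ≤ n-1), and define (fg)(t_1,...,t_n) = f(t_1,...,t_k) g(t_{k+1},...,t_n). Then for any p ≥ 1, the p-variation of fg on [0,1]^n satisfies V_p(fg ; [0,1]^n) ≤ V_p(f ; [0,1]^k) · V_p(g ; [0,1]^{n-k}). -/

import Mathlib

open Finset

/-- Rectangular increment of an `n`-variable function over the box with
corners `a` and `b`: the alternating sum
`∑_{σ∈{0,1}^n} (-1)^{#{i : σ_i = 0}} h(u^σ)` with `u_i^0 = a_i`, `u_i^1 = b_i`. -/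
def rectIncr {n : ℕ} (h : (Fin n → ℝ) → ℝ) (a b : Fin n → ℝ) : ℝ :=
  ∑ σ : Fin n → Bool,
    (-1 : ℝ) ^ (Finset.univ.filter (fun i => σ i = false)).card *
      h (fun i => if σ i then b i else a i)

lemma neg_one_pow_filter {n : ℕ} (q : Fin n → Prop) [DecidablePred q] :
    ((-1 : ℝ)) ^ (Finset.univ.filter q).card = ∏ i, if q i then (-1 : ℝ) else 1 := by
  rw [Finset.prod_ite, Finset.prod_const, Finset.prod_const, one_pow, mul_one]

/-- Split a function on `Fin (k+l)` into its two halves. -/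
def splitEquiv (k l : ℕ) (α : Fin (k + l) → Type*) :
    (∀ i, α i) ≃ (∀ i : Fin k, α (Fin.castAdd l i)) × (∀ i : Fin l, α (Fin.natAdd k i)) where
  toFun σ := (fun i => σ (Fin.castAdd l i), fun i => σ (Fin.natAdd k i))
  invFun p := fun i => Fin.addCases (motive := fun i => α i) p.1 p.2 i
  left_inv σ := by
    funext i
    refine Fin.addCases (fun j => ?_) (fun j => ?_) i
    · simp
    · simp
  right_inv p := by
    ext i
    · simp
    · simp

lemma rectIncr_mul (k l : ℕ) (f : (Fin k → ℝ) → ℝ) (g : (Fin l → ℝ) → ℝ)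
    (a b : Fin (k + l) → ℝ) :
    rectIncr (fun u => f (fun i => u (Fin.castAdd l i)) * g (fun i => u (Fin.natAdd k i))) a b
      = rectIncr f (fun i => a (Fin.castAdd l i)) (fun i => b (Fin.castAdd l i)) *
        rectIncr g (fun i => a (Fin.natAdd k i)) (fun i => b (Fin.natAdd k i)) := by
  unfold rectIncr
  rw [Finset.sum_mul_sum, ← Fintype.sum_prod_type']
  refine Fintype.sum_equiv (splitEquiv k l (fun _ => Bool)) _ _ (fun σ => ?_)
  have hsign : ((-1 : ℝ)) ^ (Finset.univ.filter (fun i => σ i = false)).card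
      = ((-1 : ℝ)) ^ (Finset.univ.filter (fun i : Fin k => σ (Fin.castAdd l i) = false)).card *
        ((-1 : ℝ)) ^ (Finset.univ.filter (fun i : Fin l => σ (Fin.natAdd k i) = false)).card := by
    rw [neg_one_pow_filter, neg_one_pow_filter, neg_one_pow_filter,
      Fin.prod_univ_add (f := fun i => if σ i = false then (-1 : ℝ) else 1)]
  simp only [splitEquiv, Equiv.coe_fn_mk]
  rw [hsign]
  ring_nf
  exact congrArg _ (by congr)

/-- If `f` and `g` have no common variables, the `p`-variation of the product
`fg` on `[0,1]^{k+l}` is bounded by the product of the `p`-variations: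
any upper bounds `Vf`, `Vg` for the `p`-variation partition sums of `f`, `g`
yield the bound `Vf · Vg` for the partition sums of `fg`. -/
theorem pVariation_product_disjoint_variables (k l : ℕ) (hk : 1 ≤ k) (hl : 1 ≤ l)
    (p : ℝ) (hp : 1 ≤ p)
    (f : (Fin k → ℝ) → ℝ) (g : (Fin l → ℝ) → ℝ)
    (hf : Continuous f) (hg : Continuous g)
    (Vf Vg : ℝ) (hVf0 : 0 ≤ Vf) (hVg0 : 0 ≤ Vg)
    (hVf : ∀ (m : Fin k → ℕ) (t : ∀ i, Fin (m i + 1) → ℝ),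
      (∀ i, Monotone (t i)) → (∀ i, t i 0 = 0) → (∀ i, t i (Fin.last (m i)) = 1) →
      ∑ c : (∀ i, Fin (m i)),
        |rectIncr f (fun i => t i (c i).castSucc) (fun i => t i (c i).succ)| ^ p
        ≤ Vf ^ p)
    (hVg : ∀ (m : Fin l → ℕ) (t : ∀ i, Fin (m i + 1) → ℝ),
      (∀ i, Monotone (t i)) → (∀ i, t i 0 = 0) → (∀ i, t i (Fin.last (m i)) = 1) →
      ∑ c : (∀ i, Fin (m i)),
        |rectIncr g (fun i => t i (c i).castSucc) (fun i => t i (c i).succ)| ^ p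
        ≤ Vg ^ p) :
    ∀ (m : Fin (k + l) → ℕ) (t : ∀ i, Fin (m i + 1) → ℝ),
      (∀ i, Monotone (t i)) → (∀ i, t i 0 = 0) → (∀ i, t i (Fin.last (m i)) = 1) →
      ∑ c : (∀ i, Fin (m i)),
        |rectIncr (fun u => f (fun i => u (Fin.castAdd l i)) *
            g (fun i => u (Fin.natAdd k i)))
          (fun i => t i (c i).castSucc) (fun i => t i (c i).succ)| ^ p
        ≤ (Vf * Vg) ^ p := by
  intro m t hmono h0 h1
  have key : ∑ c : (∀ i, Fin (m i)),
      |rectIncr (fun u => f (fun i => u (Fin.castAdd l i)) * g (fun i => u (Fin.natAdd k i)))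
        (fun i => t i (c i).castSucc) (fun i => t i (c i).succ)| ^ p
    = (∑ c : (∀ i : Fin k, Fin (m (Fin.castAdd l i))),
        |rectIncr f (fun i => t (Fin.castAdd l i) (c i).castSucc)
          (fun i => t (Fin.castAdd l i) (c i).succ)| ^ p) *
      (∑ c : (∀ i : Fin l, Fin (m (Fin.natAdd k i))),
        |rectIncr g (fun i => t (Fin.natAdd k i) (c i).castSucc)
          (fun i => t (Fin.natAdd k i) (c i).succ)| ^ p) := by
    rw [Finset.sum_mul_sum, ← Fintype.sum_prod_type']
    refine Fintype.sum_equiv (splitEquiv k l (fun i => Fin (m i))) _ _ (fun c => ?_)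
    simp only [splitEquiv, Equiv.coe_fn_mk]
    rw [rectIncr_mul, abs_mul, Real.mul_rpow (abs_nonneg _) (abs_nonneg _)]
  rw [key, Real.mul_rpow hVf0 hVg0]
  have hSf := hVf (fun i => m (Fin.castAdd l i)) (fun i => t (Fin.castAdd l i))
    (fun i => hmono _) (fun i => h0 _) (fun i => h1 _)
  have hSg := hVg (fun i => m (Fin.natAdd k i)) (fun i => t (Fin.natAdd k i))
    (fun i => hmono _) (fun i => h0 _) (fun i => h1 _)
  have hSf0 : (0:ℝ) ≤ ∑ c : (∀ i : Fin k, Fin (m (Fin.castAdd l i))),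
      |rectIncr f (fun i => t (Fin.castAdd l i) (c i).castSucc)
        (fun i => t (Fin.castAdd l i) (c i).succ)| ^ p :=
    Finset.sum_nonneg fun _ _ => Real.rpow_nonneg (abs_nonneg _) _
  have hSg0 : (0:ℝ) ≤ ∑ c : (∀ i : Fin l, Fin (m (Fin.natAdd k i))),
      |rectIncr g (fun i => t (Fin.natAdd k i) (c i).castSucc)
        (fun i => t (Fin.natAdd k i) (c i).succ)| ^ p :=
    Finset.sum_nonneg fun _ _ => Real.rpow_nonneg (abs_nonneg _) _
  exact mul_le_mul hSf hSg hSg0 (Real.rpow_nonneg hVf0 _)
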